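/- arXiv:1908.03672 — 3 statements merged into one kernel-verified Lean document; each statement's English description precedes it below -/
import Mathlib

section
/- Let $x_1, \ldots, x_n \in W$ and let $\ell \ge 1$ be odd. If some partial product of $\ell$ consecutive entries satisfies $x_j x_{j+1} \cdots x_{j+\ell-1} = 1$, then $\zeta(x_1,\ldots,x_n) = 0$ for every collapsing $n$-cocycle $\zeta \in Z^n(W,A)$; in particular $\epsilon_n^W(x_1,\ldots,x_n) = 0$. -/
open CoxeterSystem

variable {B W : Type*} [Group W] {M : CoxeterMatrix B}

/-- Given an `(n+1)`-tuple `(x₀, …, xₙ)`, the `n`-tuple obtained by multiplying the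
`j`-th and `(j+1)`-st entries: `(x₀, …, x_{j-1}, x_j · x_{j+1}, x_{j+2}, …, xₙ)`. -/
def contract {n : ℕ} (x : Fin (n + 1) → W) (j : Fin n) : Fin n → W :=
  fun i =>
    if (i : ℕ) < (j : ℕ) then x i.castSucc
    else if i = j then x i.castSucc * x i.succ
    else x i.succ

/-- `ζ` is an `n`-cocycle for the group cohomology of `W` with coefficients in the
abelian group `A` with trivial `W`-action: `(δζ) = 0`. -/
def IsCocycle {A : Type*} [AddCommGroup A] (n : ℕ) (ζ : (Fin n → W) → A) : Prop :=
  ∀ x : Fin (n + 1) → W,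
    ζ (x ∘ Fin.succ)
      + ∑ j : Fin n, ((-1 : ℤ) ^ ((j : ℕ) + 1)) • ζ (contract x j)
      + ((-1 : ℤ) ^ (n + 1)) • ζ (x ∘ Fin.castSucc) = 0

/-- `ζ` is an `n`-cocycle for the group cohomology of `W` with coefficients in the
`ℤ[W]`-module `A`: `(δζ) = 0`. -/
def IsCocycleM {A : Type*} [AddCommGroup A] [DistribMulAction W A] (n : ℕ)
    (ζ : (Fin n → W) → A) : Prop :=
  ∀ x : Fin (n + 1) → W,
    x 0 • ζ (x ∘ Fin.succ)
      + ∑ j : Fin n, ((-1 : ℤ) ^ ((j : ℕ) + 1)) • ζ (contract x j)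
      + ((-1 : ℤ) ^ (n + 1)) • ζ (x ∘ Fin.castSucc) = 0

/-- `ζ` is collapsing: it vanishes on tuples where two consecutive entries have
additive lengths. -/
def Collapsing (cs : CoxeterSystem M W) {A : Type*} [AddCommGroup A] (n : ℕ)
    (ζ : (Fin n → W) → A) : Prop :=
  ∀ x : Fin n → W, ∀ i : Fin n, ∀ hi : (i : ℕ) + 1 < n,
    cs.length (x i * x ⟨(i : ℕ) + 1, hi⟩) =
        cs.length (x i) + cs.length (x ⟨(i : ℕ) + 1, hi⟩) →
      ζ x = 0

/-- `ζ` is the canonical cocycle `ε_n^W`: a collapsing `n`-cocycle (trivial coefficients)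
taking the value `1` on `(s, …, s)` for every simple reflection `s`. -/
def IsEps (cs : CoxeterSystem M W) {A : Type*} [AddCommGroup A] [One A] (n : ℕ)
    (ζ : (Fin n → W) → A) : Prop :=
  IsCocycle n ζ ∧ Collapsing cs n ζ ∧ ∀ i : B, ζ (fun _ => cs.simple i) = 1

/-- The prefix product `x₀ ⋯ x_{k-1}`. -/
def pp {n : ℕ} (x : Fin n → W) (k : ℕ) : W := ((List.ofFn x).take k).prod


namespace CVHelper

variable (cs : CoxeterSystem M W)

/-- Extend a tuple `Fin n → W` to `ℕ → W` by `1`. -/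
def ext {n : ℕ} (x : Fin n → W) : ℕ → W := fun m => if h : m < n then x ⟨m, h⟩ else 1

lemma ext_lt {n : ℕ} (x : Fin n → W) {m : ℕ} (h : m < n) : ext x m = x ⟨m, h⟩ := dif_pos h

lemma collapse' {n : ℕ} {A : Type*} [AddCommGroup A] {ζ : (Fin n → W) → A}
    (hcol : Collapsing cs n ζ) (x : Fin n → W) (m : ℕ) (hm : m + 1 < n)
    (hadd : cs.length (ext x m * ext x (m+1)) =
      cs.length (ext x m) + cs.length (ext x (m+1))) :
    ζ x = 0 := by
  have h1 : m < n := by omega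
  refine hcol x ⟨m, h1⟩ hm ?_
  rwa [ext_lt x h1, ext_lt x hm] at hadd

lemma split_rel {n : ℕ} {A : Type*} [AddCommGroup A] [DistribMulAction W A]
    {ζ : (Fin n → W) → A} (hcoc : IsCocycleM n ζ) (hcol : Collapsing cs n ζ)
    (x : Fin n → W) (k : ℕ) (hk1 : 1 ≤ k) (hk2 : k + 2 ≤ n) (u v : W)
    (hx : ext x k = u * v) (hadd : cs.length (u * v) = cs.length u + cs.length v) :
    ζ x = ζ (fun i => if (i : ℕ) = k - 1 then ext x (k-1) * u
              else if (i : ℕ) = k then v else x i)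
        + ζ (fun i => if (i : ℕ) = k then u
              else if (i : ℕ) = k + 1 then v * ext x (k+1) else x i) := by
  classical
  set XA : Fin n → W := fun i => if (i : ℕ) = k - 1 then ext x (k-1) * u
              else if (i : ℕ) = k then v else x i with hXA
  set XB : Fin n → W := fun i => if (i : ℕ) = k then u
              else if (i : ℕ) = k + 1 then v * ext x (k+1) else x i with hXB
  set Y : ℕ → W := fun m => if m < k then ext x m
      else if m = k then u else if m = k + 1 then v else ext x (m - 1) with hY
  set y : Fin (n+1) → W := fun i => Y i with hy
  have hYlt : ∀ m, m < k → Y m = ext x m := by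
    intro m h; simp only [hY]; split_ifs <;> first | rfl | omega
  have hYk : Y k = u := by
    simp only [hY]; split_ifs <;> first | rfl | omega
  have hYk1 : Y (k+1) = v := by
    simp only [hY]; split_ifs <;> first | rfl | omega
  have hYgt : ∀ m, k + 2 ≤ m → Y m = ext x (m - 1) := by
    intro m h; simp only [hY]; split_ifs <;> first | rfl | omega
  have hcval : ∀ (jj : ℕ) (hjj : jj < n) (i : Fin n), contract y ⟨jj, hjj⟩ i =
      if (i : ℕ) < jj then Y i
      else if (i : ℕ) = jj then Y i * Y (i + 1) else Y (i + 1) := by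
    intro jj hjj i
    simp only [contract, Fin.ext_iff]
    rfl
  have hkn : k < n := by omega
  have hk1n : k + 1 < n := by omega
  have hkm1n : k - 1 < n := by omega
  -- the three interesting contractions
  have hCx : contract y ⟨k, hkn⟩ = x := by
    funext i
    rw [hcval k hkn]
    rcases lt_trichotomy (i : ℕ) k with h | h | h
    · rw [if_pos h, hYlt _ h, ext_lt x i.2]
    · rw [if_neg (by omega), if_pos h, h, hYk, hYk1, ← hx, ← h, ext_lt x i.2]
    · rw [if_neg (by omega), if_neg (by omega), hYgt _ (by omega),
        show (i : ℕ) + 1 - 1 = (i : ℕ) from by omega, ext_lt x i.2]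
  have hCA : contract y ⟨k - 1, hkm1n⟩ = XA := by
    funext i
    rw [hcval (k-1) hkm1n]; simp only [hXA]
    rcases lt_trichotomy (i : ℕ) (k - 1) with h | h | h
    · rw [if_pos h, if_neg (by omega), if_neg (by omega), hYlt _ (by omega), ext_lt x i.2]
    · rw [if_neg (by omega), if_pos h, if_pos h, h, hYlt _ (by omega),
        show k - 1 + 1 = k from by omega, hYk]
    · rcases Nat.lt_or_ge (i : ℕ) (k + 1) with h2 | h2
      · have h3 : (i : ℕ) = k := by omega
        rw [if_neg (by omega), if_neg (by omega), if_neg (by omega), if_pos h3, h3, hYk1]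
      · rw [if_neg (by omega), if_neg (by omega), if_neg (by omega), if_neg (by omega),
          hYgt _ (by omega), show (i : ℕ) + 1 - 1 = (i : ℕ) from by omega, ext_lt x i.2]
  have hCB : contract y ⟨k + 1, hk1n⟩ = XB := by
    funext i
    rw [hcval (k+1) hk1n]; simp only [hXB]
    rcases lt_trichotomy (i : ℕ) (k + 1) with h | h | h
    · rcases Nat.lt_or_ge (i : ℕ) k with h2 | h2
      · rw [if_pos h, if_neg (by omega), if_neg (by omega), hYlt _ h2, ext_lt x i.2]
      · have h3 : (i : ℕ) = k := by omega
        rw [if_pos h, if_pos h3, h3, hYk]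
    · rw [if_neg (by omega), if_pos h, if_neg (by omega), if_pos h, h, hYk1,
        hYgt _ (by omega), show k + 1 + 1 - 1 = k + 1 from by omega]
    · rw [if_neg (by omega), if_neg (by omega), if_neg (by omega), if_neg (by omega),
        hYgt _ (by omega), show (i : ℕ) + 1 - 1 = (i : ℕ) from by omega, ext_lt x i.2]
  have hcval2 : ∀ (jj : Fin n) (m : ℕ) (hm : m < n), contract y jj ⟨m, hm⟩ =
      if m < (jj : ℕ) then Y m
      else if m = (jj : ℕ) then Y m * Y (m + 1) else Y (m + 1) :=
    fun jj m hm => hcval (jj : ℕ) jj.2 ⟨m, hm⟩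
  -- other contractions vanish
  have hzero : ∀ jj : Fin n, (jj : ℕ) ≠ k - 1 → (jj : ℕ) ≠ k → (jj : ℕ) ≠ k + 1 →
      ζ (contract y jj) = 0 := by
    intro jj h1 h2 h3
    rcases Nat.lt_or_ge (jj : ℕ) k with hlt | hge
    · refine collapse' cs hcol _ (k - 1) (by omega) ?_
      have e1 : ext (contract y jj) (k - 1) = u := by
        rw [ext_lt _ hkm1n, hcval2 jj (k-1) hkm1n, if_neg (by omega), if_neg (by omega),
          show k - 1 + 1 = k from by omega, hYk]
      have e2 : ext (contract y jj) (k - 1 + 1) = v := by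
        rw [show k - 1 + 1 = k from by omega, ext_lt _ hkn, hcval2 jj k hkn,
          if_neg (by omega), if_neg (by omega), hYk1]
      rw [e1, e2]; exact hadd
    · refine collapse' cs hcol _ k (by omega) ?_
      have e1 : ext (contract y jj) k = u := by
        rw [ext_lt _ hkn, hcval2 jj k hkn, if_pos (by omega), hYk]
      have e2 : ext (contract y jj) (k + 1) = v := by
        rw [ext_lt _ hk1n, hcval2 jj (k+1) hk1n, if_pos (by omega), hYk1]
      rw [e1, e2]; exact hadd
  -- boundary terms vanish
  have hsev : ∀ (m : ℕ) (hm : m < n), ext (y ∘ Fin.succ) m = Y (m + 1) := by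
    intro m hm; rw [ext_lt _ hm]; rfl
  have hcev : ∀ (m : ℕ) (hm : m < n), ext (y ∘ Fin.castSucc) m = Y m := by
    intro m hm; rw [ext_lt _ hm]; rfl
  have hsucc0 : ζ (y ∘ Fin.succ) = 0 := by
    refine collapse' cs hcol _ (k - 1) (by omega) ?_
    rw [hsev (k-1) hkm1n, show k - 1 + 1 = k from by omega, hsev k hkn, hYk, hYk1]
    exact hadd
  have hcast0 : ζ (y ∘ Fin.castSucc) = 0 := by
    refine collapse' cs hcol _ k (by omega) ?_
    rw [hcev k hkn, hcev (k+1) hk1n, hYk, hYk1]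
    exact hadd
  -- the cocycle sum
  have hne1 : (⟨k-1, hkm1n⟩ : Fin n) ≠ ⟨k, hkn⟩ := by
    simp only [ne_eq, Fin.ext_iff]; omega
  have hne2 : (⟨k-1, hkm1n⟩ : Fin n) ≠ ⟨k+1, hk1n⟩ := by
    simp only [ne_eq, Fin.ext_iff]; omega
  have hne3 : (⟨k, hkn⟩ : Fin n) ≠ ⟨k+1, hk1n⟩ := by
    simp only [ne_eq, Fin.ext_iff]; omega
  have hsum : (∑ jj : Fin n, ((-1:ℤ)^((jj : ℕ)+1)) • ζ (contract y jj))
      = ((-1:ℤ)^k) • ζ XA + (((-1:ℤ)^(k+1)) • ζ x + ((-1:ℤ)^(k+2)) • ζ XB) := by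
    rw [← Finset.sum_subset (Finset.subset_univ
      ({⟨k-1, hkm1n⟩, ⟨k, hkn⟩, ⟨k+1, hk1n⟩} : Finset (Fin n))) ?_]
    · rw [Finset.sum_insert (by simp only [Finset.mem_insert, Finset.mem_singleton]; exact fun h => h.elim (fun h => hne1 h) (fun h => hne2 h)), Finset.sum_insert (by simpa using hne3), Finset.sum_singleton]
      rw [hCx, hCA, hCB]
      have c1 : ((⟨k-1, hkm1n⟩ : Fin n) : ℕ) = k - 1 := rfl
      have c2 : ((⟨k, hkn⟩ : Fin n) : ℕ) = k := rfl
      have c3 : ((⟨k+1, hk1n⟩ : Fin n) : ℕ) = k + 1 := rfl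
      rw [c1, c2, c3, show k - 1 + 1 = k from by omega]
    · intro jj _ hjj
      simp only [Finset.mem_insert, Finset.mem_singleton] at hjj
      push_neg at hjj
      obtain ⟨u1, u2, u3⟩ := hjj
      rw [hzero jj (fun h => u1 (Fin.ext h)) (fun h => u2 (Fin.ext h))
        (fun h => u3 (Fin.ext h)), smul_zero]
  -- assemble
  have e := hcoc y
  rw [hsum, hsucc0, smul_zero, hcast0, smul_zero, zero_add, add_zero] at e
  rcases Nat.even_or_odd k with hk | hk
  · have p1 : ((-1:ℤ))^k = 1 := hk.neg_one_pow
    have p2 : ((-1:ℤ))^(k+1) = -1 := hk.add_one.neg_one_pow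
    have p3 : ((-1:ℤ))^(k+2) = 1 := by rw [pow_add]; rw [p1]; norm_num
    rw [p1, p2, p3, one_smul, one_smul, neg_one_zsmul] at e
    have h4 : ζ x - (ζ XA + ζ XB) = -(ζ XA + (-ζ x + ζ XB)) := by abel
    rw [← sub_eq_zero, h4, e, neg_zero]
  · have p1 : ((-1:ℤ))^k = -1 := hk.neg_one_pow
    have p2 : ((-1:ℤ))^(k+1) = 1 := by
      rw [pow_succ, p1]; norm_num
    have p3 : ((-1:ℤ))^(k+2) = -1 := by
      rw [show k + 2 = (k+1)+1 from rfl, pow_succ, p2]; norm_num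
    rw [p1, p2, p3, one_smul, neg_one_zsmul, neg_one_zsmul] at e
    have h4 : ζ x - (ζ XA + ζ XB) = -ζ XA + (ζ x + -ζ XB) := by abel
    rw [← sub_eq_zero, h4, e]

/-- Window product `x_j x_{j+1} ⋯ x_{j+l-1}` (via the extension). -/
def wpr {n : ℕ} (x : Fin n → W) : ℕ → ℕ → W
  | _, 0 => 1
  | j, (l+1) => ext x j * wpr x (j+1) l

lemma wpr_succ {n : ℕ} (x : Fin n → W) (j l : ℕ) :
    wpr x j (l+1) = ext x j * wpr x (j+1) l := rfl

lemma window_eq {n : ℕ} (x : Fin n → W) :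
    ∀ j l : ℕ, j + l ≤ n → (((List.ofFn x).drop j).take l).prod = wpr x j l := by
  intro j l
  induction l generalizing j with
  | zero => intro _; simp [wpr]
  | succ l ih =>
    intro h
    have hj : j < (List.ofFn x).length := by simp; omega
    rw [List.drop_eq_getElem_cons hj]
    simp only [List.take_succ_cons, List.prod_cons, List.getElem_ofFn]
    rw [ih (j+1) (by omega), wpr_succ, ext_lt x (by omega : j < n)]

lemma wpr_congr {n : ℕ} (x y : Fin n → W) :
    ∀ j l : ℕ, (∀ m, j ≤ m → m < j + l → ext y m = ext x m) → wpr y j l = wpr x j l := by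
  intro j l
  induction l generalizing j with
  | zero => intro _; rfl
  | succ l ih =>
    intro h
    rw [wpr_succ, wpr_succ, h j le_rfl (by omega), ih (j+1) (fun m h1 h2 => h m (by omega) (by omega))]

lemma wpr_congr_pair {n : ℕ} (x y : Fin n → W) :
    ∀ j l p : ℕ, j ≤ p → p + 1 < j + l →
    (∀ m, m ≠ p → m ≠ p + 1 → ext y m = ext x m) →
    (ext y p * ext y (p+1) = ext x p * ext x (p+1)) →
    wpr y j l = wpr x j l := by
  intro j l
  induction l generalizing j with
  | zero => intro p h1 h2; omega
  | succ l ih =>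
    intro p hp1 hp2 hoff hpair
    rcases Nat.lt_or_ge j p with hj | hj
    · rw [wpr_succ, wpr_succ, hoff j (by omega) (by omega),
        ih (j+1) p (by omega) (by omega) hoff hpair]
    · have hjp : j = p := by omega
      subst hjp
      obtain ⟨l', rfl⟩ : ∃ l', l = l' + 1 := ⟨l - 1, by omega⟩
      rw [wpr_succ, wpr_succ, wpr_succ, wpr_succ, ← mul_assoc, ← mul_assoc, hpair,
        wpr_congr x y (j+1+1) l' (fun m h1 h2 => hoff m (by omega) (by omega))]

/-- Weights for the termination measure. -/
def wgt (l i : ℕ) : ℕ := if i = 0 then 1 else 3^(l - i)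

lemma wgt_zero (l : ℕ) : wgt l 0 = 1 := rfl

lemma wgt_pos' (l i : ℕ) (h : i ≠ 0) : wgt l i = 3^(l-i) := if_neg h

/-- Termination measure. -/
noncomputable def meas {n : ℕ} (x : Fin n → W) (j l : ℕ) : ℕ :=
  ∑ i ∈ Finset.range l, wgt l i * cs.length (ext x (j + i))

lemma meas_split {n : ℕ} (x : Fin n → W) (j l q : ℕ) (hq : q + 1 < l) :
    meas cs x j l = wgt l q * cs.length (ext x (j + q))
      + (wgt l (q+1) * cs.length (ext x (j + (q+1)))
      + ∑ i ∈ ((Finset.range l).erase q).erase (q+1), wgt l i * cs.length (ext x (j + i))) := by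
  rw [meas, ← Finset.add_sum_erase (a := q) _ _ (Finset.mem_range.mpr (by omega : q < l)),
    ← Finset.add_sum_erase (a := q+1) _ _
      (Finset.mem_erase.mpr ⟨by omega, Finset.mem_range.mpr (by omega)⟩)]

lemma meas_congr_pair {n : ℕ} (x y : Fin n → W) (j l p : ℕ) (hp1 : j ≤ p) (hp2 : p + 1 < j + l)
    (hoff : ∀ m, m ≠ p → m ≠ p + 1 → ext y m = ext x m) :
    meas cs y j l + (wgt l (p-j) * cs.length (ext x p) + wgt l (p-j+1) * cs.length (ext x (p+1)))
      = meas cs x j l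
        + (wgt l (p-j) * cs.length (ext y p) + wgt l (p-j+1) * cs.length (ext y (p+1))) := by
  have hq : (p - j) + 1 < l := by omega
  have hjq : j + (p - j) = p := by omega
  have hjq1 : j + (p - j + 1) = p + 1 := by omega
  rw [meas_split cs x j l (p-j) hq, meas_split cs y j l (p-j) hq, hjq, hjq1]
  have hrest : ∑ i ∈ ((Finset.range l).erase (p-j)).erase (p-j+1), wgt l i * cs.length (ext y (j + i))
      = ∑ i ∈ ((Finset.range l).erase (p-j)).erase (p-j+1), wgt l i * cs.length (ext x (j + i)) := by
    refine Finset.sum_congr rfl ?_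
    intro i hi
    simp only [Finset.mem_erase, Finset.mem_range] at hi
    rw [hoff (j + i) (by omega) (by omega)]
  rw [hrest]
  ring

lemma wpr_add {n : ℕ} (x : Fin n → W) :
    ∀ l1 j l2 : ℕ, wpr x j (l1 + l2) = wpr x j l1 * wpr x (j + l1) l2 := by
  intro l1
  induction l1 with
  | zero => intro j l2; simp [wpr]
  | succ l1 ih =>
    intro j l2
    have h : l1 + 1 + l2 = (l1 + l2) + 1 := by omega
    rw [h, wpr_succ, wpr_succ, ih (j+1) l2, show j+1+l1 = j+(l1+1) from by omega, mul_assoc]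

lemma wpr_one {n : ℕ} (x : Fin n → W) (j : ℕ) : wpr x j 1 = ext x j := by
  rw [wpr_succ]; simp [wpr]

lemma wpr_const {n : ℕ} (x : Fin n → W) (c : W) :
    ∀ l j : ℕ, (∀ m, j ≤ m → m < j + l → ext x m = c) → wpr x j l = c ^ l := by
  intro l
  induction l with
  | zero => intro j _; simp [wpr]
  | succ l ih =>
    intro j h
    rw [wpr_succ, h j le_rfl (by omega), ih (j+1) (fun m h1 h2 => h m (by omega) (by omega)),
      pow_succ']

/-- The "left" modification of a split. -/
def modA {n : ℕ} (x : Fin n → W) (k : ℕ) (u v : W) : Fin n → W :=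
  fun i => if (i : ℕ) = k - 1 then ext x (k-1) * u else if (i : ℕ) = k then v else x i

/-- The "right" modification of a split. -/
def modB {n : ℕ} (x : Fin n → W) (k : ℕ) (u v : W) : Fin n → W :=
  fun i => if (i : ℕ) = k then u else if (i : ℕ) = k + 1 then v * ext x (k+1) else x i

lemma ext_modA {n : ℕ} (x : Fin n → W) (k : ℕ) (u v : W) (hk : k < n) (m : ℕ) :
    ext (modA x k u v) m
      = if m = k - 1 then ext x (k-1) * u else if m = k then v else ext x m := by
  by_cases h : m < n
  · rw [ext_lt _ h]
    show (if m = k - 1 then ext x (k-1) * u else if m = k then v else x ⟨m, h⟩) = _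
    split_ifs <;> first | rfl | (rw [ext_lt x h])
  · have e : ∀ z : Fin n → W, ext z m = 1 := fun z => dif_neg h
    rw [e, if_neg (by omega), if_neg (by omega), e]
lemma ext_modB {n : ℕ} (x : Fin n → W) (k : ℕ) (u v : W) (hk : k + 1 < n) (m : ℕ) :
    ext (modB x k u v) m
      = if m = k then u else if m = k + 1 then v * ext x (k+1) else ext x m := by
  by_cases h : m < n
  · rw [ext_lt _ h]
    show (if m = k then u else if m = k + 1 then v * ext x (k+1) else x ⟨m, h⟩) = _
    split_ifs <;> first | rfl | (rw [ext_lt x h])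
  · have e : ∀ z : Fin n → W, ext z m = 1 := fun z => dif_neg h
    rw [e, if_neg (by omega), if_neg (by omega), e]

lemma split_all {n : ℕ} {A : Type*} [AddCommGroup A] [DistribMulAction W A]
    {ζ : (Fin n → W) → A} (hcoc : IsCocycleM n ζ) (hcol : Collapsing cs n ζ)
    (j l : ℕ) (x : Fin n → W) (k : ℕ) (hjk : j + 1 ≤ k) (hkl : k + 2 ≤ j + l)
    (hjl : j + l ≤ n) (u v : W) (hx : ext x k = u * v)
    (hadd : cs.length (u * v) = cs.length u + cs.length v) :
    ζ x = ζ (modA x k u v) + ζ (modB x k u v)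
      ∧ wpr (modA x k u v) j l = wpr x j l
      ∧ wpr (modB x k u v) j l = wpr x j l := by
  have hk1 : 1 ≤ k := by omega
  have hk2 : k + 2 ≤ n := by omega
  have hkn : k < n := by omega
  have hk1n : k + 1 < n := by omega
  refine ⟨split_rel cs hcoc hcol x k hk1 hk2 u v hx hadd, ?_, ?_⟩
  · refine wpr_congr_pair x _ j l (k-1) (by omega) (by omega) ?_ ?_
    · intro m h1 h2
      rw [ext_modA x k u v hkn m, if_neg h1, if_neg (by omega)]
    · rw [show k - 1 + 1 = k from by omega, ext_modA x k u v hkn (k-1), if_pos rfl,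
        ext_modA x k u v hkn k, if_neg (by omega), if_pos rfl, mul_assoc, ← hx]
  · refine wpr_congr_pair x _ j l k (by omega) (by omega) ?_ ?_
    · intro m h1 h2
      rw [ext_modB x k u v hk1n m, if_neg h1, if_neg h2]
    · rw [ext_modB x k u v hk1n k, if_pos rfl, ext_modB x k u v hk1n (k+1),
        if_neg (by omega), if_pos rfl, ← mul_assoc, ← hx]

lemma meas_lt_of_pair {n : ℕ} (x y : Fin n → W) (j l p : ℕ) (hp1 : j ≤ p) (hp2 : p + 1 < j + l)
    (hoff : ∀ m, m ≠ p → m ≠ p + 1 → ext y m = ext x m)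
    (key : wgt l (p-j) * cs.length (ext y p) + wgt l (p-j+1) * cs.length (ext y (p+1))
      < wgt l (p-j) * cs.length (ext x p) + wgt l (p-j+1) * cs.length (ext x (p+1))) :
    meas cs y j l < meas cs x j l := by
  have hmc := meas_congr_pair cs x y j l p hp1 hp2 hoff
  have h2 : meas cs y j l
        + (wgt l (p-j) * cs.length (ext y p) + wgt l (p-j+1) * cs.length (ext y (p+1)))
      < meas cs x j l
        + (wgt l (p-j) * cs.length (ext y p) + wgt l (p-j+1) * cs.length (ext y (p+1))) := by
    rw [← hmc]
    exact Nat.add_lt_add_left key _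
  exact Nat.lt_of_add_lt_add_right h2

lemma keyA1_nat (P b0 av aw b0v : ℕ) (hP : 0 < P) (hlt : b0v < b0 + av) :
    b0v + P * aw < b0 + P * (av + aw) := by
  calc b0v + P * aw < (b0 + av) + P * aw := Nat.add_lt_add_right hlt _
    _ ≤ (b0 + P * av) + P * aw :=
        Nat.add_le_add_right (Nat.add_le_add_left (Nat.le_mul_of_pos_left av hP) _) _
    _ = b0 + P * (av + aw) := by ring
lemma keyA2_nat (P b0 av : ℕ) (hP : 2 ≤ P) (hv : 1 ≤ av) :
    (b0 + av) + P * 1 < b0 + P * (av + 1) := by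
  have h : 1 * av < P * av := Nat.mul_lt_mul_of_pos_right (by omega) (by omega)
  rw [one_mul] at h
  calc (b0 + av) + P * 1 = b0 + (av + P) := by ring
    _ < b0 + (P * av + P) := by exact Nat.add_lt_add_left (by omega) _
    _ = b0 + P * (av + 1) := by ring
lemma keyB_nat (W1 W2 av aw ab abw : ℕ) (hW : W2 < W1) (hw : 1 ≤ aw) (habw : abw ≤ aw + ab) :
    W1 * av + W2 * abw < W1 * (av + aw) + W2 * ab := by
  have h : W2 * aw < W1 * aw := Nat.mul_lt_mul_of_pos_right hW (by omega)
  calc W1 * av + W2 * abw ≤ W1 * av + W2 * (aw + ab) :=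
        Nat.add_le_add_left (Nat.mul_le_mul_left _ habw) _
    _ = (W1 * av + W2 * ab) + W2 * aw := by ring
    _ < (W1 * av + W2 * ab) + W1 * aw := Nat.add_lt_add_left h _
    _ = W1 * (av + aw) + W2 * ab := by ring

lemma main3 {n : ℕ} {A : Type*} [AddCommGroup A] [DistribMulAction W A]
    {ζ : (Fin n → W) → A} (hcoc : IsCocycleM n ζ) (hcol : Collapsing cs n ζ)
    (j l : ℕ) (hl : Odd l) (h3 : 3 ≤ l) (hjl : j + l ≤ n) :
    ∀ N (x : Fin n → W), meas cs x j l ≤ N → wpr x j l = 1 → ζ x = 0 := by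
  intro N
  induction N using Nat.strong_induction_on with
  | _ N IH =>
  intro x hmN hp
  by_cases hpairs : ∃ m, m + 1 < n ∧ cs.length (ext x m * ext x (m+1))
      = cs.length (ext x m) + cs.length (ext x (m+1))
  · obtain ⟨m, hmn, hadd⟩ := hpairs
    exact collapse' cs hcol x m hmn hadd
  push_neg at hpairs
  have hnadd : ∀ m, m + 1 < n → cs.length (ext x m * ext x (m+1))
      < cs.length (ext x m) + cs.length (ext x (m+1)) :=
    fun m h => lt_of_le_of_ne (cs.length_mul_le _ _) (hpairs m h)
  have hne1 : ∀ m, j ≤ m → m < j + l → ext x m ≠ 1 := by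
    intro m h1 h2 hone
    rcases Nat.lt_or_ge (m+1) n with hc | hc
    · have h := hnadd m hc
      rw [hone, one_mul, cs.length_one, Nat.zero_add] at h
      exact absurd h (lt_irrefl _)
    · have h := hnadd (m-1) (by omega)
      rw [show m - 1 + 1 = m from by omega, hone, mul_one, cs.length_one, Nat.add_zero] at h
      exact absurd h (lt_irrefl _)
  have hP1big : (3:ℕ)^2 ≤ 3^(l-1) := Nat.pow_le_pow_right (by norm_num) (by omega)
  have hP1pos : 0 < (3:ℕ)^(l-1) := pow_pos (by norm_num) _
  have hP2P1 : (3:ℕ)^(l-2) < 3^(l-1) := Nat.pow_lt_pow_right (by norm_num) (by omega)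
  rcases Nat.lt_or_ge (cs.length (ext x (j+1))) 2 with hsmall | hbig
  · -- chain case : ℓ(ext x (j+1)) ≤ 1
    have hb1ne : ext x (j+1) ≠ 1 := hne1 (j+1) (by omega) (by omega)
    have hb1l : cs.length (ext x (j+1)) = 1 := by
      have h0 : cs.length (ext x (j+1)) ≠ 0 := fun h => hb1ne (cs.length_eq_zero_iff.mp h)
      omega
    obtain ⟨i0, hs0⟩ := cs.length_eq_one_iff.mp hb1l
    obtain ⟨t0, ht0⟩ := hl
    have hpowev : (cs.simple i0)^(l-1) = 1 := by
      rw [show l - 1 = 2 * t0 from by omega, pow_mul, pow_two, cs.simple_mul_simple_self,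
        one_pow]
    have chain : ∀ d r : ℕ, r + d = l - 1 → 1 ≤ r →
        (∀ q, 1 ≤ q → q ≤ r → ext x (j+q) = cs.simple i0) → ζ x = 0 := by
      intro d
      induction d with
      | zero =>
        intro r hr h1 hch
        exfalso
        have hconst : wpr x (j+1) (l-1) = (cs.simple i0)^(l-1) := by
          refine wpr_const x _ (l-1) (j+1) ?_
          intro m h1' h2'
          have hm : m = j + (m - j) := by omega
          rw [hm]
          exact hch (m-j) (by omega) (by omega)
        rw [show l = 1 + (l-1) from by omega, wpr_add, wpr_one, hconst, hpowev, mul_one] at hp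
        exact hne1 j (by omega) (by omega) hp
      | succ d ihd =>
        intro r hr h1 hch
        by_cases hnext : ext x (j+r+1) = cs.simple i0
        · refine ihd (r+1) (by omega) (by omega) ?_
          intro q hq1 hq2
          rcases Nat.lt_or_ge q (r+1) with h | h
          · exact hch q hq1 (by omega)
          · have hq : q = r + 1 := by omega
            rw [hq, show j + (r+1) = j + r + 1 from by omega]
            exact hnext
        · have hjr := hnadd (j+r) (by omega)
          rw [hch r h1 le_rfl, cs.length_simple] at hjr
          have hdec : cs.length (cs.simple i0 * ext x (j+r+1)) + 1
              = cs.length (ext x (j+r+1)) := by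
            rcases cs.length_simple_mul (ext x (j+r+1)) i0 with h | h
            · omega
            · exact h
          rcases Nat.lt_or_ge (r+1) (l-1) with hrl | hrl
          · -- split case
            have hbne : ext x (j+r+1) ≠ 1 := hne1 (j+r+1) (by omega) (by omega)
            have hb0' : cs.length (ext x (j+r+1)) ≠ 0 :=
              fun h => hbne (cs.length_eq_zero_iff.mp h)
            have hble : 2 ≤ cs.length (ext x (j+r+1)) := by
              rcases Nat.lt_or_ge (cs.length (ext x (j+r+1))) 2 with h | h
              · exfalso
                apply hnext
                have hsb1 : cs.simple i0 * ext x (j+r+1) = 1 :=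
                  cs.length_eq_zero_iff.mp (by omega)
                have hcan := cs.simple_mul_simple_cancel_left (w := ext x (j+r+1)) i0
                rw [hsb1, mul_one] at hcan
                exact hcan.symm
              · exact h
            set w : W := cs.simple i0 * ext x (j+r+1) with hwdef
            have hxk : ext x (j+r+1) = cs.simple i0 * w :=
              (cs.simple_mul_simple_cancel_left i0).symm
            have hadds : cs.length (cs.simple i0 * w)
                = cs.length (cs.simple i0) + cs.length w := by
              rw [← hxk, cs.length_simple]
              omega
            obtain ⟨hrel, hwA, hwB⟩ := split_all cs hcoc hcol j l x (j+r+1) (by omega)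
              (by omega) hjl (cs.simple i0) w hxk hadds
            have hA0 : ζ (modA x (j+r+1) (cs.simple i0) w) = 0 := by
              refine collapse' cs hcol _ (j+r) (by omega) ?_
              have e1 : ext (modA x (j+r+1) (cs.simple i0) w) (j+r) = 1 := by
                rw [ext_modA x _ _ _ (by omega) (j+r), if_pos (by omega),
                  show j+r+1-1 = j+r from by omega, hch r h1 le_rfl,
                  cs.simple_mul_simple_self]
              have e2 : ext (modA x (j+r+1) (cs.simple i0) w) (j+r+1) = w := by
                rw [ext_modA x _ _ _ (by omega) (j+r+1), if_neg (by omega), if_pos rfl]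
              rw [show j + r + 1 = (j+r) + 1 from rfl] at e2
              rw [e1, e2, one_mul, cs.length_one, Nat.zero_add]
            have hwpos : 1 ≤ cs.length w := by omega
            have hble2 : cs.length (ext x (j+r+1)) = 1 + cs.length w := by omega
            have eB1 : ext (modB x (j+r+1) (cs.simple i0) w) (j+r+1) = cs.simple i0 := by
              rw [ext_modB x _ _ _ (by omega) (j+r+1), if_pos rfl]
            have eB2 : ext (modB x (j+r+1) (cs.simple i0) w) (j+r+1+1)
                = w * ext x (j+r+1+1) := by
              rw [ext_modB x _ _ _ (by omega) (j+r+1+1), if_neg (by omega), if_pos rfl]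
            have hmB : meas cs (modB x (j+r+1) (cs.simple i0) w) j l < meas cs x j l := by
              refine meas_lt_of_pair cs x _ j l (j+r+1) (by omega) (by omega) ?_ ?_
              · intro m hm1 hm2
                rw [ext_modB x _ _ _ (by omega) m, if_neg hm1, if_neg hm2]
              · rw [show j + r + 1 - j = r + 1 from by omega, wgt_pos' l (r+1) (by omega),
                  wgt_pos' l (r+1+1) (by omega), eB1, eB2, cs.length_simple, hble2]
                have hWW : (3:ℕ)^(l-(r+1+1)) < 3^(l-(r+1)) :=
                  Nat.pow_lt_pow_right (by norm_num) (by omega)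
                exact keyB_nat _ _ 1 (cs.length w) _ _ hWW hwpos (cs.length_mul_le w _)
            have hB0 : ζ (modB x (j+r+1) (cs.simple i0) w) = 0 :=
              IH _ (lt_of_lt_of_le hmB hmN) _ le_rfl (hwB.trans hp)
            rw [hrel, hA0, hB0, add_zero]
          · -- r = l - 2 : contradiction
            exfalso
            have hconst : wpr x (j+1) (l-2) = (cs.simple i0)^(l-2) := by
              refine wpr_const x _ (l-2) (j+1) ?_
              intro m h1' h2'
              have hm : m = j + (m - j) := by omega
              rw [hm]
              exact hch (m-j) (by omega) (by omega)
            have hpowodd : (cs.simple i0)^(l-2) = cs.simple i0 := by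
              rw [show l - 2 = 2 * (t0-1) + 1 from by omega, pow_succ, pow_mul, pow_two,
                cs.simple_mul_simple_self, one_pow, one_mul]
            have hp' : ext x j * (cs.simple i0 * ext x (j+r+1)) = 1 := by
              rw [show l = 1 + ((l-2) + 1) from by omega, wpr_add, wpr_one,
                wpr_add x (l-2) (j+1) 1, wpr_one, hconst, hpowodd,
                show j + 1 + (l-2) = j + r + 1 from by omega] at hp
              exact hp
            have hb0s : cs.length (ext x j * cs.simple i0) + 1 = cs.length (ext x j) := by
              have hj0 := hnadd j (by omega)
              rw [hs0, cs.length_simple] at hj0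
              rcases cs.length_mul_simple (ext x j) i0 with h | h
              · omega
              · exact h
            have hbl : (ext x j * cs.simple i0)⁻¹ = ext x (j+r+1) := by
              refine inv_eq_of_mul_eq_one_right ?_
              rw [mul_assoc]
              exact hp'
            have hlbl : cs.length (ext x (j+r+1)) = cs.length (ext x j * cs.simple i0) := by
              rw [← hbl, cs.length_inv]
            have hsbl : cs.length (cs.simple i0 * ext x (j+r+1)) = cs.length (ext x j) := by
              have h1 : cs.simple i0 * ext x (j+r+1) = (ext x j)⁻¹ := by
                rw [← hbl, mul_inv_rev, cs.inv_simple, cs.simple_mul_simple_cancel_left]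
              rw [h1, cs.length_inv]
            omega
    exact chain (l-2) 1 (by omega) le_rfl (fun q hq1 hq2 => by
      have hq : q = 1 := by omega
      rw [hq]; exact hs0)
  · -- ℓ (ext x (j+1)) ≥ 2
    by_cases hI : ∃ v w : W, ext x (j+1) = v * w ∧ cs.length (v * w) = cs.length v + cs.length w
        ∧ v ≠ 1 ∧ w ≠ 1 ∧ cs.length (ext x j * v) < cs.length (ext x j) + cs.length v
    · obtain ⟨v, w, hvw, hads, hv1, hw1, hlt⟩ := hI
      obtain ⟨hrel, hwA, hwB⟩ := split_all cs hcoc hcol j l x (j+1) le_rfl (by omega) hjl v w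
        hvw hads
      have h2 : cs.length (ext x (j+1)) = cs.length v + cs.length w := by rw [hvw]; exact hads
      have hwpos : 1 ≤ cs.length w :=
        Nat.pos_of_ne_zero (fun h => hw1 (cs.length_eq_zero_iff.mp h))
      have eA1 : ext (modA x (j+1) v w) j = ext x j * v := by
        rw [ext_modA x (j+1) v w (by omega) j, if_pos (by omega), Nat.add_sub_cancel]
      have eA2 : ext (modA x (j+1) v w) (j+1) = w := by
        rw [ext_modA x (j+1) v w (by omega) (j+1), if_neg (by omega), if_pos rfl]
      have eB1 : ext (modB x (j+1) v w) (j+1) = v := by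
        rw [ext_modB x (j+1) v w (by omega) (j+1), if_pos rfl]
      have eB2 : ext (modB x (j+1) v w) (j+1+1) = w * ext x (j+1+1) := by
        rw [ext_modB x (j+1) v w (by omega) (j+1+1), if_neg (by omega), if_pos rfl]
      have hmA : meas cs (modA x (j+1) v w) j l < meas cs x j l := by
        refine meas_lt_of_pair cs x _ j l j le_rfl (by omega) ?_ ?_
        · intro m h1 h2'
          rw [ext_modA x (j+1) v w (by omega) m, if_neg (by omega), if_neg (by omega)]
        · rw [Nat.sub_self, Nat.zero_add, wgt_zero, wgt_pos' l 1 one_ne_zero, one_mul, one_mul,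
            eA1, eA2, h2]
          exact keyA1_nat _ _ _ _ _ hP1pos hlt
      have hmB : meas cs (modB x (j+1) v w) j l < meas cs x j l := by
        refine meas_lt_of_pair cs x _ j l (j+1) (by omega) (by omega) ?_ ?_
        · intro m h1 h2'
          rw [ext_modB x (j+1) v w (by omega) m, if_neg (by omega), if_neg (by omega)]
        · rw [show j + 1 - j = 1 from by omega, wgt_pos' l 1 one_ne_zero,
            wgt_pos' l 2 (by norm_num), eB1, eB2, h2]
          exact keyB_nat _ _ _ _ _ _ hP2P1 hwpos (cs.length_mul_le w _)
      have hA0 : ζ (modA x (j+1) v w) = 0 :=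
        IH _ (lt_of_lt_of_le hmA hmN) _ le_rfl (hwA.trans hp)
      have hB0 : ζ (modB x (j+1) v w) = 0 :=
        IH _ (lt_of_lt_of_le hmB hmN) _ le_rfl (hwB.trans hp)
      rw [hrel, hA0, hB0, add_zero]
    · push_neg at hI
      obtain ⟨i0, hdesc⟩ := cs.exists_rightDescent_of_ne_one (hne1 (j+1) (by omega) (by omega))
      set v : W := ext x (j+1) * cs.simple i0 with hv
      have hvw : ext x (j+1) = v * cs.simple i0 := by
        rw [hv, mul_assoc, cs.simple_mul_simple_self, mul_one]
      have hlv : cs.length v + 1 = cs.length (ext x (j+1)) := cs.isRightDescent_iff.mp hdesc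
      have hads : cs.length (v * cs.simple i0) = cs.length v + cs.length (cs.simple i0) := by
        rw [← hvw, cs.length_simple]
        omega
      have hs1 : cs.simple i0 ≠ 1 := by
        intro h
        have := cs.length_simple i0
        rw [h, cs.length_one] at this
        exact absurd this (by norm_num)
      have hv1 : v ≠ 1 := by
        intro h
        rw [h, cs.length_one] at hlv
        omega
      have haddA : cs.length (ext x j * v) = cs.length (ext x j) + cs.length v :=
        le_antisymm (cs.length_mul_le _ _) (hI v (cs.simple i0) hvw hads hv1 hs1)
      obtain ⟨hrel, hwA, hwB⟩ := split_all cs hcoc hcol j l x (j+1) le_rfl (by omega) hjl v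
        (cs.simple i0) hvw hads
      have h2 : cs.length (ext x (j+1)) = cs.length v + 1 := by omega
      have eA1 : ext (modA x (j+1) v (cs.simple i0)) j = ext x j * v := by
        rw [ext_modA x (j+1) v _ (by omega) j, if_pos (by omega), Nat.add_sub_cancel]
      have eA2 : ext (modA x (j+1) v (cs.simple i0)) (j+1) = cs.simple i0 := by
        rw [ext_modA x (j+1) v _ (by omega) (j+1), if_neg (by omega), if_pos rfl]
      have eB1 : ext (modB x (j+1) v (cs.simple i0)) (j+1) = v := by
        rw [ext_modB x (j+1) v _ (by omega) (j+1), if_pos rfl]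
      have eB2 : ext (modB x (j+1) v (cs.simple i0)) (j+1+1)
          = cs.simple i0 * ext x (j+1+1) := by
        rw [ext_modB x (j+1) v _ (by omega) (j+1+1), if_neg (by omega), if_pos rfl]
      have hmA : meas cs (modA x (j+1) v (cs.simple i0)) j l < meas cs x j l := by
        refine meas_lt_of_pair cs x _ j l j le_rfl (by omega) ?_ ?_
        · intro m h1 h2'
          rw [ext_modA x (j+1) v _ (by omega) m, if_neg (by omega), if_neg (by omega)]
        · rw [Nat.sub_self, Nat.zero_add, wgt_zero, wgt_pos' l 1 one_ne_zero, one_mul, one_mul,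
            eA1, eA2, h2, cs.length_simple, haddA]
          exact keyA2_nat _ _ _ (by omega) (by omega)
      have hmB : meas cs (modB x (j+1) v (cs.simple i0)) j l < meas cs x j l := by
        refine meas_lt_of_pair cs x _ j l (j+1) (by omega) (by omega) ?_ ?_
        · intro m h1 h2'
          rw [ext_modB x (j+1) v _ (by omega) m, if_neg (by omega), if_neg (by omega)]
        · rw [show j + 1 - j = 1 from by omega, wgt_pos' l 1 one_ne_zero,
            wgt_pos' l 2 (by norm_num), eB1, eB2, h2]
          have hle : cs.length (cs.simple i0 * ext x (j+1+1))
              ≤ 1 + cs.length (ext x (j+1+1)) := by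
            have := cs.length_mul_le (cs.simple i0) (ext x (j+1+1))
            rwa [cs.length_simple] at this
          exact keyB_nat _ _ _ _ _ _ hP2P1 le_rfl hle
      have hA0 : ζ (modA x (j+1) v (cs.simple i0)) = 0 :=
        IH _ (lt_of_lt_of_le hmA hmN) _ le_rfl (hwA.trans hp)
      have hB0 : ζ (modB x (j+1) v (cs.simple i0)) = 0 :=
        IH _ (lt_of_lt_of_le hmB hmN) _ le_rfl (hwB.trans hp)
      rw [hrel, hA0, hB0, add_zero]

end CVHelper

open CVHelper in
/-- If some partial product of an odd number `l` of consecutive entries equals `1`,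
i.e. `x_{j+1} x_{j+2} ⋯ x_{j+l} = 1`, then every collapsing `n`-cocycle
`ζ ∈ Zⁿ(W, A)` (valued in a `ℤ[W]`-module `A`) vanishes at `(x₁, …, xₙ)`; in
particular `εₙ^W(x₁, …, xₙ) = 0`. -/
theorem collapsing_vanishes_of_odd_partial_product_one (cs : CoxeterSystem M W)
    (n : ℕ) (hn : 1 ≤ n) {A : Type*} [AddCommGroup A] [DistribMulAction W A]
    (ζ : (Fin n → W) → A) (hcoc : IsCocycleM n ζ) (hcol : Collapsing cs n ζ)
    (x : Fin n → W) (j l : ℕ) (hl : Odd l) (hjl : j + l ≤ n)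
    (hprod : (((List.ofFn x).drop j).take l).prod = 1) :
    ζ x = 0 := by
  classical
  have hw : wpr x j l = 1 := by
    rw [← window_eq x j l hjl]
    exact hprod
  rcases Nat.lt_or_ge l 3 with hl3 | hl3
  · -- l = 1
    have hl1 : l = 1 := by obtain ⟨t, ht⟩ := hl; omega
    subst hl1
    have hx1 : ext x j = 1 := by rw [← wpr_one x j]; exact hw
    rcases Nat.lt_or_ge 1 n with hn2 | hn2
    · rcases Nat.lt_or_ge (j+1) n with hc | hc
      · refine collapse' cs hcol x j hc ?_
        rw [hx1, one_mul, cs.length_one, Nat.zero_add]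
      · refine collapse' cs hcol x (j-1) (by omega) ?_
        rw [show j - 1 + 1 = j from by omega, hx1, mul_one, cs.length_one, Nat.add_zero]
    · -- n = 1
      have hn1 : n = 1 := by omega
      subst hn1
      have hj0 : j = 0 := by omega
      subst hj0
      have hxall : x = fun _ => (1:W) := by
        funext i
        have hi : i = ⟨0, by omega⟩ := by
          apply Fin.ext
          omega
        rw [hi, ← ext_lt x (show 0 < 1 by omega)]
        exact hx1
      subst hxall
      have e := hcoc (fun _ => (1:W))
      have h1 : ((fun (_ : Fin (1+1)) => (1:W)) ∘ Fin.succ) = (fun (_ : Fin 1) => (1:W)) := rfl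
      have h2 : ((fun (_ : Fin (1+1)) => (1:W)) ∘ Fin.castSucc)
          = (fun (_ : Fin 1) => (1:W)) := rfl
      have hc' : contract (fun _ => (1:W)) (0 : Fin 1) = fun (_ : Fin 1) => (1:W) := by
        funext i
        simp [contract]
      rw [h1, h2, Fin.sum_univ_one, hc'] at e
      have hv0 : (((0 : Fin 1) : ℕ)) = 0 := rfl
      rw [hv0] at e
      norm_num at e
      exact e
  · exact main3 cs hcoc hcol j l hl hl3 hjl (meas cs x j l) x le_rfl hw
end

section
/- For all $x, y, z \in W$ with $y = s$ a simple reflection: $\epsilon_3^W(x,s,z) = 1$ if $|xs| < |x|$ and $|sz| < |z|$, and $\epsilon_3^W(x,s,z) = 0$ otherwise. -/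
open CoxeterSystem

variable {B W : Type*} [Group W] {M : CoxeterMatrix B}

private lemma cocycle4 (ζ : (Fin 3 → W) → ZMod 2) (h : IsCocycle 3 ζ) (a b c d : W) :
    ζ ![b,c,d] + ζ ![a*b,c,d] + ζ ![a,b*c,d] + ζ ![a,b,c*d] + ζ ![a,b,c] = 0 := by
  have := h ![a,b,c,d]
  rw [Fin.sum_univ_three] at this
  have e0 : contract ![a,b,c,d] (0 : Fin 3) = ![a*b,c,d] := by
    funext i; fin_cases i <;> rfl
  have e1 : contract ![a,b,c,d] (1 : Fin 3) = ![a,b*c,d] := by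
    funext i; fin_cases i <;> rfl
  have e2 : contract ![a,b,c,d] (2 : Fin 3) = ![a,b,c*d] := by
    funext i; fin_cases i <;> rfl
  have es : ![a,b,c,d] ∘ Fin.succ = ![b,c,d] := by funext i; fin_cases i <;> rfl
  have ec : ![a,b,c,d] ∘ Fin.castSucc = ![a,b,c] := by funext i; fin_cases i <;> rfl
  rw [e0, e1, e2, es, ec] at this
  simp only [Fin.val_zero, Fin.val_one, Fin.val_two] at this
  norm_num at this
  linear_combination this

private lemma collapse0 (cs : CoxeterSystem M W) (ζ : (Fin 3 → W) → ZMod 2)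
    (h : Collapsing cs 3 ζ) (a b c : W)
    (hab : cs.length (a*b) = cs.length a + cs.length b) : ζ ![a,b,c] = 0 :=
  h ![a,b,c] 0 (by norm_num) (by simpa using hab)

private lemma collapse1 (cs : CoxeterSystem M W) (ζ : (Fin 3 → W) → ZMod 2)
    (h : Collapsing cs 3 ζ) (a b c : W)
    (hbc : cs.length (b*c) = cs.length b + cs.length c) : ζ ![a,b,c] = 0 :=
  h ![a,b,c] 1 (by norm_num) (by simpa using hbc)

/-- For `s` a simple reflection: `ε₃^W(x, s, z) = 1` if `|xs| < |x|` and `|sz| < |z|`,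
and `ε₃^W(x, s, z) = 0` otherwise.  Here `ε₃^W ∈ Z³(W, 𝔽₂)` is the unique collapsing
`3`-cocycle with `ε₃^W(s, s, s) = 1` for all simple `s`. -/
theorem eps_three_middle_simple (cs : CoxeterSystem M W)
    (ζ : (Fin 3 → W) → ZMod 2) (hζ : IsEps cs 3 ζ) (x z : W) (i : B) :
    ζ ![x, cs.simple i, z] =
      if cs.length (x * cs.simple i) < cs.length x ∧
          cs.length (cs.simple i * z) < cs.length z
      then 1 else 0 := by
  obtain ⟨hcoc, hcol, hone⟩ := hζ
  set s := cs.simple i with hs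
  by_cases h1 : cs.length (x * s) < cs.length x
  · by_cases h2 : cs.length (s * z) < cs.length z
    · rw [if_pos ⟨h1, h2⟩]
      -- descents give factorizations
      have hx : cs.length (x * s) + 1 = cs.length x :=
        (cs.isRightDescent_iff.mp h1)
      have hz : cs.length (s * z) + 1 = cs.length z :=
        (cs.isLeftDescent_iff.mp h2)
      have hls : cs.length s = 1 := cs.length_simple i
      set x' := x * s with hx'
      set z' := s * z with hz'
      have hss : s * s = 1 := cs.simple_mul_simple_self i
      have hxs : x' * s = x := by rw [hx', mul_assoc, hss, mul_one]
      have hzs : s * z' = z := by rw [hz', ← mul_assoc, hss, one_mul]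
      -- Step 1: ζ ![x, s, z] = ζ ![s, s, z], from cocycle on (x', s, s, z)
      have step1 : ζ ![x, s, z] = ζ ![s, s, z] := by
        have hc := cocycle4 ζ hcoc x' s s z
        rw [hxs, hss] at hc
        have t1 : ζ ![x', (1 : W), z] = 0 :=
          collapse0 cs ζ hcol _ _ _ (by simp)
        have t2 : ζ ![x', s, s * z] = 0 :=
          collapse0 cs ζ hcol _ _ _ (by rw [hxs, hls]; omega)
        have t3 : ζ ![x', s, s] = 0 :=
          collapse0 cs ζ hcol _ _ _ (by rw [hxs, hls]; omega)
        rw [t1, t2, t3] at hc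
        have hv : ζ ![x, s, z] = -ζ ![s, s, z] := by linear_combination hc
        rw [hv, CharTwo.neg_eq]
      -- Step 2: ζ ![s, s, z] = 1, from cocycle on (s, s, s, z')
      have step2 : ζ ![s, s, z] = 1 := by
        have hc := cocycle4 ζ hcoc s s s z'
        rw [hss, hzs] at hc
        have t1 : ζ ![s, s, z'] = 0 :=
          collapse1 cs ζ hcol _ _ _ (by rw [hzs, hls]; omega)
        have t2 : ζ ![(1 : W), s, z'] = 0 :=
          collapse0 cs ζ hcol _ _ _ (by simp)
        have t3 : ζ ![s, (1 : W), z'] = 0 :=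
          collapse0 cs ζ hcol _ _ _ (by simp)
        have t4 : ζ ![s, s, s] = 1 := by
          have : ![s, s, s] = (fun _ : Fin 3 => cs.simple i) := by
            funext j; fin_cases j <;> rfl
          rw [this]; exact hone i
        rw [t1, t2, t3, t4] at hc
        have hv : ζ ![s, s, z] = -1 := by linear_combination hc
        rw [hv]; decide
      rw [step1, step2]
    · rw [if_neg (by tauto)]
      have hls : cs.length s = 1 := cs.length_simple i
      have h2' : cs.length (s * z) = cs.length s + cs.length z := by
        rcases cs.length_simple_mul z i with h | h <;> rw [← hs] at h
        · rw [h, hls]; omega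
        · omega
      exact collapse1 cs ζ hcol _ _ _ h2'
  · rw [if_neg (by tauto)]
    have hls : cs.length s = 1 := cs.length_simple i
    have h1' : cs.length (x * s) = cs.length x + cs.length s := by
      rcases cs.length_mul_simple x i with h | h <;> rw [← hs] at h
      · rw [h, hls]
      · omega
    exact collapse0 cs ζ hcol _ _ _ h1'
end

section
/- For all $x, y, z \in W$: (a) $\epsilon_3^W(x,y,z) = 0$ if $xyz = 1$; (b) $\epsilon_3^W(y^{-1},y,z) \equiv \frac{1}{2}(|y|+|z|-|yz|) \pmod 2$; (c) $\epsilon_3^W(x,x^{-1},x) \equiv |x| \pmod 2$; (d) $\epsilon_3^W(x,y,z) = \epsilon_3^W(y,z,(xyz)^{-1})$. -/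
open CoxeterSystem

variable {B W : Type*} [Group W] {M : CoxeterMatrix B}

section EpsAux

variable (cs : CoxeterSystem M W) {ζ : (Fin 3 → W) → ZMod 2}

private lemma z2_smul (k : ℕ) (v : ZMod 2) : ((-1 : ℤ) ^ k) • v = v := by
  rcases Nat.even_or_odd k with h | h
  · rw [h.neg_one_pow, one_smul]
  · rw [h.neg_one_pow, neg_one_smul, CharTwo.neg_eq]

private lemma z2_solve1 {x1 x2 x3 x4 x5 : ZMod 2} (h : x1 + x2 + x3 + x4 + x5 = 0) :
    x1 = x2 + x3 + x4 + x5 := by revert h; revert x1 x2 x3 x4 x5; decide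

private lemma z2_solve2 {x1 x2 x3 x4 x5 : ZMod 2} (h : x1 + x2 + x3 + x4 + x5 = 0) :
    x2 = x1 + x3 + x4 + x5 := by revert h; revert x1 x2 x3 x4 x5; decide

private lemma z2_solve3 {x1 x2 x3 x4 x5 : ZMod 2} (h : x1 + x2 + x3 + x4 + x5 = 0) :
    x3 = x1 + x2 + x4 + x5 := by revert h; revert x1 x2 x3 x4 x5; decide

private lemma z2_solve4 {x1 x2 x3 x4 x5 : ZMod 2} (h : x1 + x2 + x3 + x4 + x5 = 0) :
    x4 = x1 + x2 + x3 + x5 := by revert h; revert x1 x2 x3 x4 x5; decide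

private lemma z2_solve5 {x1 x2 x3 x4 x5 : ZMod 2} (h : x1 + x2 + x3 + x4 + x5 = 0) :
    x5 = x1 + x2 + x3 + x4 := by revert h; revert x1 x2 x3 x4 x5; decide

private lemma cocycle5 (hc : IsCocycle 3 ζ) (a b c d : W) :
    ζ ![b, c, d] + ζ ![a * b, c, d] + ζ ![a, b * c, d] + ζ ![a, b, c * d] + ζ ![a, b, c] = 0 := by
  have h := hc ![a, b, c, d]
  have h1 : (![a, b, c, d] ∘ Fin.succ) = ![b, c, d] := by
    funext i; fin_cases i <;> rfl
  have h2 : (![a, b, c, d] ∘ Fin.castSucc) = ![a, b, c] := by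
    funext i; fin_cases i <;> rfl
  have h3 : contract ![a, b, c, d] 0 = ![a * b, c, d] := by
    funext i; fin_cases i <;> rfl
  have h4 : contract ![a, b, c, d] 1 = ![a, b * c, d] := by
    funext i; fin_cases i <;> rfl
  have h5 : contract ![a, b, c, d] 2 = ![a, b, c * d] := by
    funext i; fin_cases i <;> rfl
  rw [Fin.sum_univ_three, h1, h2, h3, h4, h5] at h
  simp only [z2_smul] at h
  linear_combination h

private lemma collapse01 (hcol : Collapsing cs 3 ζ) {a b : W} (c : W)
    (h : cs.length (a * b) = cs.length a + cs.length b) : ζ ![a, b, c] = 0 := by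
  apply hcol ![a, b, c] 0 (by norm_num)
  simpa using h

private lemma collapse12 (hcol : Collapsing cs 3 ζ) (a : W) {b c : W}
    (h : cs.length (b * c) = cs.length b + cs.length c) : ζ ![a, b, c] = 0 := by
  apply hcol ![a, b, c] 1 (by norm_num)
  simpa using h

private lemma zeta1L (hcol : Collapsing cs 3 ζ) (b c : W) : ζ ![1, b, c] = 0 :=
  collapse01 cs hcol c (by simp)

private lemma zeta1M (hcol : Collapsing cs 3 ζ) (a c : W) : ζ ![a, 1, c] = 0 :=
  collapse01 cs hcol c (by simp)

/-- `ζ(s, s, w) = 1` iff `s` is a left descent of `w`. -/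
private lemma zeta_ss (hc : IsCocycle 3 ζ) (hcol : Collapsing cs 3 ζ)
    (hone : ∀ i : B, ζ (fun _ => cs.simple i) = 1) (i : B) (w : W) :
    ζ ![cs.simple i, cs.simple i, w] =
      if cs.length (cs.simple i * w) < cs.length w then 1 else 0 := by
  rcases cs.length_simple_mul w i with h | h
  · rw [if_neg (by omega)]
    exact collapse12 cs hcol _ (by rw [h, cs.length_simple]; omega)
  · rw [if_pos (by omega)]
    have hww : cs.simple i * (cs.simple i * w) = w := cs.simple_mul_simple_cancel_left i
    have h5 := cocycle5 hc (cs.simple i) (cs.simple i) (cs.simple i) (cs.simple i * w)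
    rw [cs.simple_mul_simple_self, hww] at h5
    have e1 : ζ ![cs.simple i, cs.simple i, cs.simple i * w] = 0 := by
      apply collapse12 cs hcol
      rw [hww, cs.length_simple]; omega
    have e2 := zeta1L cs hcol (cs.simple i) (cs.simple i * w)
    have e3 := zeta1M cs hcol (cs.simple i) (cs.simple i * w)
    have e4 : ζ ![cs.simple i, cs.simple i, cs.simple i] = 1 := by
      rw [show ![cs.simple i, cs.simple i, cs.simple i] = (fun _ => cs.simple i) from by
        funext j; fin_cases j <;> rfl]
      exact hone i
    have key := z2_solve4 h5
    rw [e1, e2, e3, e4] at key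
    rw [key]; simp

/-- If `s` is a left descent of `w`, then `ζ(s, w, z) = 1` iff `s` is not a left descent
of `w * z`. -/
private lemma zeta_L (hc : IsCocycle 3 ζ) (hcol : Collapsing cs 3 ζ)
    (hone : ∀ i : B, ζ (fun _ => cs.simple i) = 1) (i : B) {w : W} (z : W)
    (hd : cs.length (cs.simple i * w) < cs.length w) :
    ζ ![cs.simple i, w, z] =
      if cs.length (w * z) < cs.length (cs.simple i * (w * z)) then 1 else 0 := by
  have hww : cs.simple i * (cs.simple i * w) = w := cs.simple_mul_simple_cancel_left i
  have hlen : cs.length (cs.simple i * w) + 1 = cs.length w := by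
    rcases cs.length_simple_mul w i with h | h
    · omega
    · exact h
  have c5 := cocycle5 hc (cs.simple i) (cs.simple i) (cs.simple i * w) z
  rw [hww] at c5
  have e1 : ζ ![cs.simple i, cs.simple i * w, z] = 0 := by
    apply collapse01 cs hcol
    rw [hww, cs.length_simple]; omega
  have e2 : ζ ![cs.simple i * cs.simple i, cs.simple i * w, z] = 0 := by
    rw [cs.simple_mul_simple_self]; exact zeta1L cs hcol _ _
  have e5 : ζ ![cs.simple i, cs.simple i, cs.simple i * w] = 0 := by
    rw [zeta_ss cs hc hcol hone, if_neg (by rw [hww]; omega)]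
  have e4 : ζ ![cs.simple i, cs.simple i, cs.simple i * w * z] = if cs.length (w * z) <
      cs.length (cs.simple i * (w * z)) then 1 else 0 := by
    rw [zeta_ss cs hc hcol hone, mul_assoc, cs.simple_mul_simple_cancel_left]
  have key := z2_solve4 c5
  rw [e1, e2, e5, e4] at key
  rw [key]; simp

/-- left reduction of the first entry. -/
private lemma red1 (hc : IsCocycle 3 ζ) (hcol : Collapsing cs 3 ζ) (i : B) (x' y z : W)
    (ha : cs.length (cs.simple i * x') = cs.length x' + 1) :
    ζ ![cs.simple i * x', y, z] = ζ ![x', y, z] + ζ ![cs.simple i, x' * y, z] := by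
  have c5 := cocycle5 hc (cs.simple i) x' y z
  have e4 : ζ ![cs.simple i, x', y * z] = 0 :=
    collapse01 cs hcol _ (by rw [ha, cs.length_simple]; omega)
  have e5 : ζ ![cs.simple i, x', y] = 0 :=
    collapse01 cs hcol _ (by rw [ha, cs.length_simple]; omega)
  have key := z2_solve2 c5
  rw [e4, e5] at key
  rw [key]; ring

/-- Property (b): `ζ(y⁻¹, y, z) = (ℓ y + ℓ z - ℓ (y z))/2`. -/
private lemma lem_f (hc : IsCocycle 3 ζ) (hcol : Collapsing cs 3 ζ)
    (hone : ∀ i : B, ζ (fun _ => cs.simple i) = 1) :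
    ∀ n : ℕ, ∀ y z : W, cs.length y ≤ n →
      ζ ![y⁻¹, y, z] =
        (((cs.length y + cs.length z - cs.length (y * z)) / 2 : ℕ) : ZMod 2) := by
  intro n
  induction n with
  | zero =>
    intro y z hy
    have hy1 : y = 1 := cs.length_eq_zero_iff.mp (Nat.le_zero.mp hy)
    subst hy1
    rw [inv_one, zeta1L cs hcol, one_mul, cs.length_one]
    simp
  | succ n ih =>
    intro y z hy
    by_cases hy1 : y = 1
    · subst hy1
      rw [inv_one, zeta1L cs hcol, one_mul, cs.length_one]
      simp
    · obtain ⟨i, hd⟩ := cs.exists_leftDescent_of_ne_one hy1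
      have hd' : cs.length (cs.simple i * y) < cs.length y := hd
      have hlu : cs.length (cs.simple i * y) + 1 = cs.length y := by
        rcases cs.length_simple_mul y i with h | h
        · omega
        · exact h
      have hinv : (cs.simple i * y)⁻¹ * cs.simple i = y⁻¹ := by
        simp [mul_inv_rev, cs.inv_simple]
      have c5 := cocycle5 hc (cs.simple i * y)⁻¹ (cs.simple i) y z
      rw [hinv] at c5
      have hcollapse : cs.length ((cs.simple i * y)⁻¹ * cs.simple i) =
          cs.length (cs.simple i * y)⁻¹ + cs.length (cs.simple i) := by
        rw [hinv, cs.length_inv, cs.length_inv, cs.length_simple]; omega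
      have e4 : ζ ![(cs.simple i * y)⁻¹, cs.simple i, y * z] = 0 :=
        collapse01 cs hcol _ hcollapse
      have e5 : ζ ![(cs.simple i * y)⁻¹, cs.simple i, y] = 0 :=
        collapse01 cs hcol _ hcollapse
      have e3 : ζ ![(cs.simple i * y)⁻¹, cs.simple i * y, z] =
          (((cs.length (cs.simple i * y) + cs.length z -
            cs.length ((cs.simple i * y) * z)) / 2 : ℕ) : ZMod 2) :=
        ih (cs.simple i * y) z (by omega)
      have e1 : ζ ![cs.simple i, y, z] =
          if cs.length (y * z) < cs.length (cs.simple i * (y * z)) then 1 else 0 :=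
        zeta_L cs hc hcol hone i z hd'
      have key := z2_solve2 c5
      rw [e1, e3, e4, e5] at key
      rw [key]
      have hassoc : cs.simple i * (y * z) = (cs.simple i * y) * z := (mul_assoc _ _ _).symm
      have hle : cs.length ((cs.simple i * y) * z) ≤ cs.length (cs.simple i * y) + cs.length z :=
        cs.length_mul_le _ _
      rcases cs.length_simple_mul (y * z) i with h | h <;> rw [hassoc] at h
      · -- ℓ((s i * y) * z) = ℓ(y * z) + 1 : the indicator is 1
        rw [if_pos (by rw [hassoc]; omega)]
        rw [show (cs.length y + cs.length z - cs.length (y * z)) / 2 =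
          (cs.length (cs.simple i * y) + cs.length z -
            cs.length ((cs.simple i * y) * z)) / 2 + 1 from by omega]
        push_cast
        ring
      · -- ℓ((s i * y) * z) + 1 = ℓ(y * z) : the indicator is 0
        rw [if_neg (by rw [hassoc]; omega)]
        rw [show (cs.length y + cs.length z - cs.length (y * z)) / 2 =
          (cs.length (cs.simple i * y) + cs.length z -
            cs.length ((cs.simple i * y) * z)) / 2 from by omega]
        ring

/-- Property (b'): `ζ(a, b, b⁻¹) = (ℓ a + ℓ b - ℓ (a b))/2`. -/
private lemma lem_g (hc : IsCocycle 3 ζ) (hcol : Collapsing cs 3 ζ)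
    (hone : ∀ i : B, ζ (fun _ => cs.simple i) = 1) :
    ∀ n : ℕ, ∀ a b : W, cs.length a ≤ n →
      ζ ![a, b, b⁻¹] =
        (((cs.length a + cs.length b - cs.length (a * b)) / 2 : ℕ) : ZMod 2) := by
  intro n
  induction n with
  | zero =>
    intro a b ha
    have ha1 : a = 1 := cs.length_eq_zero_iff.mp (Nat.le_zero.mp ha)
    subst ha1
    rw [zeta1L cs hcol, one_mul, cs.length_one]
    simp
  | succ n ih =>
    intro a b ha
    by_cases ha1 : a = 1
    · subst ha1
      rw [zeta1L cs hcol, one_mul, cs.length_one]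
      simp
    · obtain ⟨i, hd⟩ := cs.exists_leftDescent_of_ne_one ha1
      have hd' : cs.length (cs.simple i * a) < cs.length a := hd
      have hla : cs.length (cs.simple i * a) + 1 = cs.length a := by
        rcases cs.length_simple_mul a i with h | h
        · omega
        · exact h
      have hww : cs.simple i * (cs.simple i * a) = a := cs.simple_mul_simple_cancel_left i
      have hr := red1 cs hc hcol i (cs.simple i * a) b b⁻¹
        (by rw [hww]; omega)
      rw [hww] at hr
      have e1 : ζ ![cs.simple i * a, b, b⁻¹] =
          (((cs.length (cs.simple i * a) + cs.length b -
            cs.length ((cs.simple i * a) * b)) / 2 : ℕ) : ZMod 2) :=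
        ih (cs.simple i * a) b (by omega)
      have hab : cs.simple i * ((cs.simple i * a) * b) = a * b := by
        rw [← mul_assoc, hww]
      have hle : cs.length ((cs.simple i * a) * b) ≤ cs.length (cs.simple i * a) + cs.length b :=
        cs.length_mul_le _ _
      rcases cs.length_simple_mul ((cs.simple i * a) * b) i with h | h <;> rw [hab] at h
      · -- ℓ(a * b) = ℓ((s i * a) * b) + 1 : second term of hr equals 0
        have e2 : ζ ![cs.simple i, (cs.simple i * a) * b, b⁻¹] = 0 := by
          apply collapse01 cs hcol
          rw [hab, cs.length_simple]; omega
        rw [hr, e1, e2]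
        rw [show (cs.length a + cs.length b - cs.length (a * b)) / 2 =
          (cs.length (cs.simple i * a) + cs.length b -
            cs.length ((cs.simple i * a) * b)) / 2 from by omega]
        ring
      · -- ℓ(a * b) + 1 = ℓ((s i * a) * b) : second term of hr equals 1
        have e2 : ζ ![cs.simple i, (cs.simple i * a) * b, b⁻¹] = 1 := by
          rw [zeta_L cs hc hcol hone i b⁻¹ (by rw [hab]; omega)]
          rw [mul_inv_cancel_right, hww, if_pos hd']
        rw [hr, e1, e2]
        have hpar : cs.length ((cs.simple i * a) * b) % 2 =
            (cs.length (cs.simple i * a) + cs.length b) % 2 :=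
          cs.length_mul_mod_two _ _
        rw [show (cs.length a + cs.length b - cs.length (a * b)) / 2 =
          (cs.length (cs.simple i * a) + cs.length b -
            cs.length ((cs.simple i * a) * b)) / 2 + 1 from by omega]
        push_cast
        ring

/-- Property (a), special form. -/
private lemma lem_a (hc : IsCocycle 3 ζ) (hcol : Collapsing cs 3 ζ)
    (hone : ∀ i : B, ζ (fun _ => cs.simple i) = 1) (x y : W) :
    ζ ![x, y, (x * y)⁻¹] = 0 := by
  have c5 := cocycle5 hc x⁻¹ x y (x * y)⁻¹
  rw [inv_mul_cancel] at c5
  have hyxy : y * (x * y)⁻¹ = x⁻¹ := by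
    rw [mul_inv_rev, mul_inv_cancel_left]
  rw [hyxy] at c5
  have e2 := zeta1L cs hcol y (x * y)⁻¹
  have e3 : ζ ![x⁻¹, x * y, (x * y)⁻¹] =
      (((cs.length x⁻¹ + cs.length (x * y) - cs.length (x⁻¹ * (x * y))) / 2 : ℕ) : ZMod 2) :=
    lem_g cs hc hcol hone (cs.length x⁻¹) x⁻¹ (x * y) le_rfl
  rw [cs.length_inv, inv_mul_cancel_left] at e3
  have e4 : ζ ![x⁻¹, x, x⁻¹] =
      (((cs.length x + cs.length x⁻¹ - cs.length (x * x⁻¹)) / 2 : ℕ) : ZMod 2) :=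
    lem_f cs hc hcol hone (cs.length x) x x⁻¹ le_rfl
  rw [cs.length_inv, mul_inv_cancel, cs.length_one] at e4
  have e5 : ζ ![x⁻¹, x, y] =
      (((cs.length x + cs.length y - cs.length (x * y)) / 2 : ℕ) : ZMod 2) :=
    lem_f cs hc hcol hone (cs.length x) x y le_rfl
  have key := z2_solve1 c5
  rw [e2, e3, e4, e5] at key
  rw [key, zero_add]
  have hle1 : cs.length (x * y) ≤ cs.length x + cs.length y := cs.length_mul_le x y
  have hle2 : cs.length y - cs.length x ≤ cs.length (x * y) :=
    cs.length_mul_ge_length_sub_length' x y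
  have hpar : cs.length (x * y) % 2 = (cs.length x + cs.length y) % 2 :=
    cs.length_mul_mod_two x y
  rw [← Nat.cast_add, ← Nat.cast_add]
  rw [show (cs.length x + cs.length (x * y) - cs.length y) / 2 +
      (cs.length x + cs.length x - 0) / 2 +
      (cs.length x + cs.length y - cs.length (x * y)) / 2 = 2 * cs.length x from by omega]
  rw [Nat.cast_mul, ZMod.natCast_self, zero_mul]

/-- Property (a). -/
private lemma lem_a' (hc : IsCocycle 3 ζ) (hcol : Collapsing cs 3 ζ)
    (hone : ∀ i : B, ζ (fun _ => cs.simple i) = 1) (x y z : W) (h : x * y * z = 1) :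
    ζ ![x, y, z] = 0 := by
  have hz : z = (x * y)⁻¹ := eq_inv_of_mul_eq_one_right h
  rw [hz]
  exact lem_a cs hc hcol hone x y

/-- Property (d). -/
private lemma lem_d (hc : IsCocycle 3 ζ) (hcol : Collapsing cs 3 ζ)
    (hone : ∀ i : B, ζ (fun _ => cs.simple i) = 1) (x y z : W) :
    ζ ![x, y, z] = ζ ![y, z, (x * y * z)⁻¹] := by
  have c5 := cocycle5 hc x y z (x * y * z)⁻¹
  have e2 : ζ ![x * y, z, (x * y * z)⁻¹] = 0 :=
    lem_a' cs hc hcol hone _ _ _ (by group)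
  have e3 : ζ ![x, y * z, (x * y * z)⁻¹] = 0 :=
    lem_a' cs hc hcol hone _ _ _ (by group)
  have e4 : ζ ![x, y, z * (x * y * z)⁻¹] = 0 :=
    lem_a' cs hc hcol hone _ _ _ (by group)
  have key := z2_solve5 c5
  rw [e2, e3, e4] at key
  rw [key]; ring

end EpsAux

/-- Properties of `ε₃^W` (the unique collapsing `3`-cocycle valued in `𝔽₂` with
`ε₃^W(s,s,s) = 1` for all simple `s`):
(a) `ε₃^W(x, y, z) = 0` if `xyz = 1`;
(b) `ε₃^W(y⁻¹, y, z) ≡ ½(|y| + |z| - |yz|) (mod 2)`;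
(c) `ε₃^W(x, x⁻¹, x) ≡ |x| (mod 2)`;
(d) `ε₃^W(x, y, z) = ε₃^W(y, z, (xyz)⁻¹)`. -/
theorem eps_three_properties (cs : CoxeterSystem M W)
    (ζ : (Fin 3 → W) → ZMod 2) (hζ : IsEps cs 3 ζ) :
    (∀ x y z : W, x * y * z = 1 → ζ ![x, y, z] = 0) ∧
    (∀ y z : W, ζ ![y⁻¹, y, z] =
      (((cs.length y + cs.length z - cs.length (y * z)) / 2 : ℕ) : ZMod 2)) ∧
    (∀ x : W, ζ ![x, x⁻¹, x] = (cs.length x : ZMod 2)) ∧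
    (∀ x y z : W, ζ ![x, y, z] = ζ ![y, z, (x * y * z)⁻¹]) := by
  obtain ⟨hc, hcol, hone⟩ := hζ
  refine ⟨fun x y z h => lem_a' cs hc hcol hone x y z h,
    fun y z => lem_f cs hc hcol hone (cs.length y) y z le_rfl,
    fun x => ?_,
    fun x y z => lem_d cs hc hcol hone x y z⟩
  have hx := lem_f cs hc hcol hone (cs.length x⁻¹) x⁻¹ x le_rfl
  rw [inv_inv, cs.length_inv, inv_mul_cancel, cs.length_one] at hx
  rw [hx, show (cs.length x + cs.length x - 0) / 2 = cs.length x from by omega]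
end
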